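/- Let Y and Z be arbitrary real-valued random variables on a common probability space with cumulative distribution functions F_Y and F_Z. Then for every y, z ∈ ℝ: P(Y ≤ y and Z ≤ z) = P(F_Y(Y) ≤ F_Y(y) and F_Z(Z) ≤ F_Z(z)). -/

import Mathlib

open MeasureTheory ProbabilityTheory

/-- For a finite measure `μ` on `ℝ`, for any `t > y` with `F(t) ≤ F(y)`,
the interval `(y, t]` is null. -/
lemma aux_Ioc_null (μ : Measure ℝ) [IsFiniteMeasure μ] {y t : ℝ}
    (h1 : y < t) (h2 : μ (Set.Iic t) ≤ μ (Set.Iic y)) : μ (Set.Ioc y t) = 0 := by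
  have hu : Set.Iic y ∪ Set.Ioc y t = Set.Iic t := Set.Iic_union_Ioc_eq_Iic h1.le
  have hd : Disjoint (Set.Iic y) (Set.Ioc y t) := Set.Iic_disjoint_Ioc le_rfl
  have hm : μ (Set.Iic y) + μ (Set.Ioc y t) = μ (Set.Iic t) := by
    rw [← measure_union hd measurableSet_Ioc, hu]
  have hle : μ (Set.Iic y) + μ (Set.Ioc y t) ≤ μ (Set.Iic y) := hm.le.trans h2
  have hfin : μ (Set.Iic y) ≠ ⊤ := measure_ne_top μ _
  have := (ENNReal.cancel_of_ne hfin).add_le_iff_nonpos_right.mp hle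
  exact nonpos_iff_eq_zero.mp this

/-- The discrepancy set `{t | y < t ∧ F(t) ≤ F(y)}` is null. -/
lemma aux_discrepancy_null (μ : Measure ℝ) [IsFiniteMeasure μ] (y : ℝ) :
    μ {t | y < t ∧ μ (Set.Iic t) ≤ μ (Set.Iic y)} = 0 := by
  set B : Set ℝ := {t | y < t ∧ μ (Set.Iic t) ≤ μ (Set.Iic y)} with hB
  have hkey : ∀ t ∈ B, μ (Set.Ioc y t) = 0 := fun t ht => aux_Ioc_null μ ht.1 ht.2
  set N : Set ℝ := ⋃ q : ℚ, ⋃ (_ : μ (Set.Ioc y (q : ℝ)) = 0), Set.Ioc y (q : ℝ) with hN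
  have hNnull : μ N = 0 := by
    refine measure_iUnion_null fun q => ?_
    by_cases h : μ (Set.Ioc y (q : ℝ)) = 0
    · simp [h]
    · simp [h]
  have hBN : μ (B \ N) = 0 := by
    rcases Set.eq_empty_or_nonempty (B \ N) with h | ⟨t, ht⟩
    · simp [h]
    · have hsub : B \ N ⊆ {t} := by
        intro s hs
        by_contra hst
        have hne : s ≠ t := by simpa using hst
        rcases hne.lt_or_gt with hlt | hlt
        · obtain ⟨q, hq1, hq2⟩ := exists_rat_btwn hlt
          have hq0 : μ (Set.Ioc y (q : ℝ)) = 0 := by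
            refine measure_mono_null (Set.Ioc_subset_Ioc_right hq2.le) ?_
            exact hkey t ht.1
          exact hs.2 (Set.mem_iUnion.mpr ⟨q, Set.mem_iUnion.mpr ⟨hq0, hs.1.1, hq1.le⟩⟩)
        · obtain ⟨q, hq1, hq2⟩ := exists_rat_btwn hlt
          have hq0 : μ (Set.Ioc y (q : ℝ)) = 0 := by
            refine measure_mono_null (Set.Ioc_subset_Ioc_right hq2.le) ?_
            exact hkey s hs.1
          exact ht.2 (Set.mem_iUnion.mpr ⟨q, Set.mem_iUnion.mpr ⟨hq0, ht.1.1, hq1.le⟩⟩)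
      refine measure_mono_null hsub ?_
      refine measure_mono_null ?_ (hkey t ht.1)
      intro s hs
      rcases hs with rfl
      exact ⟨ht.1.1, le_rfl⟩
  have : μ B ≤ μ N + μ (B \ N) := by
    refine le_trans (measure_mono ?_) (measure_union_le _ _)
    intro s hs
    by_cases h : s ∈ N
    · exact Or.inl h
    · exact Or.inr ⟨hs, h⟩
  simpa [hNnull, hBN] using this

/-- For arbitrary real-valued random variables `Y`, `Z` with cdfs `F_Y`, `F_Z`:
`P(Y ≤ y, Z ≤ z) = P(F_Y(Y) ≤ F_Y(y), F_Z(Z) ≤ F_Z(z))`. -/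
theorem stmt2 {Ω : Type*} [MeasurableSpace Ω] (P : Measure Ω) [IsProbabilityMeasure P]
    (Y Z : Ω → ℝ) (hY : Measurable Y) (hZ : Measurable Z) (y z : ℝ) :
    P {ω | Y ω ≤ y ∧ Z ω ≤ z} =
      P {ω | ((P.map Y) (Set.Iic (Y ω))).toReal ≤ ((P.map Y) (Set.Iic y)).toReal ∧
             ((P.map Z) (Set.Iic (Z ω))).toReal ≤ ((P.map Z) (Set.Iic z)).toReal} := by
  haveI : IsProbabilityMeasure (P.map Y) := Measure.isProbabilityMeasure_map hY.aemeasurable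
  haveI : IsProbabilityMeasure (P.map Z) := Measure.isProbabilityMeasure_map hZ.aemeasurable
  set μY := P.map Y with hμY
  set μZ := P.map Z with hμZ
  set A : Set Ω := {ω | Y ω ≤ y ∧ Z ω ≤ z} with hA
  set A' : Set Ω := {ω | (μY (Set.Iic (Y ω))).toReal ≤ (μY (Set.Iic y)).toReal ∧
      (μZ (Set.Iic (Z ω))).toReal ≤ (μZ (Set.Iic z)).toReal} with hA'
  set BY : Set ℝ := {t | y < t ∧ μY (Set.Iic t) ≤ μY (Set.Iic y)} with hBY
  set BZ : Set ℝ := {t | z < t ∧ μZ (Set.Iic t) ≤ μZ (Set.Iic z)} with hBZ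
  have hsub : A ⊆ A' := by
    intro ω hω
    constructor
    · exact ENNReal.toReal_mono (measure_ne_top μY _)
        (measure_mono (Set.Iic_subset_Iic.mpr hω.1))
    · exact ENNReal.toReal_mono (measure_ne_top μZ _)
        (measure_mono (Set.Iic_subset_Iic.mpr hω.2))
  have hsub' : A' ⊆ A ∪ (Y ⁻¹' BY ∪ Z ⁻¹' BZ) := by
    intro ω hω
    by_cases hy : Y ω ≤ y
    · by_cases hz : Z ω ≤ z
      · exact Or.inl ⟨hy, hz⟩
      · refine Or.inr (Or.inr ⟨not_le.mp hz, ?_⟩)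
        exact (ENNReal.toReal_le_toReal (measure_ne_top μZ _) (measure_ne_top μZ _)).mp hω.2
    · refine Or.inr (Or.inl ⟨not_le.mp hy, ?_⟩)
      exact (ENNReal.toReal_le_toReal (measure_ne_top μY _) (measure_ne_top μY _)).mp hω.1
  have hYnull : P (Y ⁻¹' BY) = 0 := by
    refine le_antisymm (le_trans (Measure.le_map_apply hY.aemeasurable _) ?_) zero_le
    rw [← hμY]
    exact (aux_discrepancy_null μY y).le
  have hZnull : P (Z ⁻¹' BZ) = 0 := by
    refine le_antisymm (le_trans (Measure.le_map_apply hZ.aemeasurable _) ?_) zero_le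
    rw [← hμZ]
    exact (aux_discrepancy_null μZ z).le
  refine le_antisymm (measure_mono hsub) ?_
  calc P A' ≤ P (A ∪ (Y ⁻¹' BY ∪ Z ⁻¹' BZ)) := measure_mono hsub'
    _ ≤ P A + P (Y ⁻¹' BY ∪ Z ⁻¹' BZ) := measure_union_le _ _
    _ ≤ P A + (P (Y ⁻¹' BY) + P (Z ⁻¹' BZ)) := by
        exact add_le_add le_rfl (measure_union_le _ _)
    _ = P A := by rw [hYnull, hZnull]; simp
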